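/- The group SU(2) admits no left-invariant Levi-flat CR structure: there is no one-dimensional complex Lie subalgebra h of su(2) ⊗ C with h ∩ h̄ = 0 such that h + h̄ is a Lie subalgebra. -/
import Mathlib
open Matrix Complex

private lemma key1 (a b c α β : ℂ)
    (E1 : c * (starRingEnd ℂ) c - b * (starRingEnd ℂ) b = α * a - β * (starRingEnd ℂ) a)
    (E2 : 2 * ((starRingEnd ℂ) a * b - a * (starRingEnd ℂ) c) = α * b - β * (starRingEnd ℂ) c)
    (E3 : 2 * (a * (starRingEnd ℂ) b - (starRingEnd ℂ) a * c) = α * c - β * (starRingEnd ℂ) b) :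
    b * (starRingEnd ℂ) b = c * (starRingEnd ℂ) c ∧
      a * (starRingEnd ℂ) c = (starRingEnd ℂ) a * b := by
  set K := starRingEnd ℂ
  have main : (b * K b - c * K c)^2 + 4 * ((a * K c - K a * b) * (K a * c - a * K b)) = 0 := by
    by_cases hs : 2 * normSq a + normSq b + normSq c = 0
    · have h0 := normSq_nonneg a; have h1 := normSq_nonneg b; have h2 := normSq_nonneg c
      have ha : a = 0 := normSq_eq_zero.mp (by linarith)
      have hb : b = 0 := normSq_eq_zero.mp (by linarith)
      have hc : c = 0 := normSq_eq_zero.mp (by linarith)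
      simp [ha, hb, hc]
    have hsC : (2 * a * K a + b * K b + c * K c : ℂ) ≠ 0 := by
      have : (2 * a * K a + b * K b + c * K c : ℂ) =
          ((2 * normSq a + normSq b + normSq c : ℝ) : ℂ) := by
        push_cast [← Complex.mul_conj]; ring
      rw [this]
      exact_mod_cast Complex.ofReal_ne_zero.mpr hs
    have T1 : α * (2*a^2 + 2*b*c) = β * (2*a*K a + b*K b + c*K c) := by
      linear_combination (-2*a)*E1 - c*E2 - b*E3
    have T2 : α * (2*a*K a + b*K b + c*K c) = β * (2*(K a)^2 + 2*(K b)*(K c)) := by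
      linear_combination (-2*(K a))*E1 - (K b)*E2 - (K c)*E3
    by_cases hα : α = 0
    · have hβ : β = 0 := by
        have h0 : β * (2*a*K a + b*K b + c*K c) = 0 := by rw [← T1, hα, zero_mul]
        rcases mul_eq_zero.mp h0 with h | h
        · exact h
        · exact absurd h hsC
      have e1 : c * K c - b * K b = 0 := by
        linear_combination E1 + a*hα - (K a)*hβ
      have e3 : a * K b - K a * c = 0 := by
        linear_combination E3/2 + (c/2)*hα - (K b/2)*hβ
      linear_combination (-(b*K b - c*K c))*e1 + (-4*(a*K c - K a*b))*e3
    · have hts : (2*a^2 + 2*b*c) * (2*(K a)^2 + 2*(K b)*(K c)) =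
          (2*a*K a + b*K b + c*K c)^2 := by
        have h1 : α * ((2*a^2 + 2*b*c) * (2*(K a)^2 + 2*(K b)*(K c))) =
            α * ((2*a*K a + b*K b + c*K c)^2) := by
          calc α * ((2*a^2 + 2*b*c) * (2*(K a)^2 + 2*(K b)*(K c)))
              = (α * (2*a^2 + 2*b*c)) * (2*(K a)^2 + 2*(K b)*(K c)) := by ring
            _ = (β * (2*a*K a + b*K b + c*K c)) * (2*(K a)^2 + 2*(K b)*(K c)) := by rw [T1]
            _ = (β * (2*(K a)^2 + 2*(K b)*(K c))) * (2*a*K a + b*K b + c*K c) := by ring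
            _ = (α * (2*a*K a + b*K b + c*K c)) * (2*a*K a + b*K b + c*K c) := by rw [← T2]
            _ = α * ((2*a*K a + b*K b + c*K c)^2) := by ring
        exact mul_left_cancel₀ hα h1
      linear_combination -hts
  have hconj : K (a * K c - K a * b) = K a * c - a * K b := by
    simp only [map_sub, _root_.map_mul, Complex.conj_conj, K]
  have hz : a * K c - K a * b = 0 := by
    have main2 : ((normSq b - normSq c : ℝ) : ℂ)^2
        + 4 * ((normSq (a * K c - K a * b) : ℝ) : ℂ) = 0 := by
      rw [← Complex.mul_conj (a * K c - K a * b), hconj]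
      push_cast [← Complex.mul_conj]
      linear_combination main
    have mainR : (normSq b - normSq c)^2 + 4 * normSq (a * K c - K a * b) = 0 := by
      exact_mod_cast main2
    have h1 : normSq (a * K c - K a * b) = 0 := by
      nlinarith [normSq_nonneg (a * K c - K a * b), sq_nonneg (normSq b - normSq c)]
    exact normSq_eq_zero.mp h1
  have hu : b * K b = c * K c := by
    have hzz : (a * K c - K a * b) * (K a * c - a * K b) = 0 := by
      rw [← hconj, hz]; simp
    have h2 : (b * K b - c * K c)^2 = 0 := by linear_combination main - 4*hzz
    exact sub_eq_zero.mp ((pow_eq_zero_iff two_ne_zero).mp h2)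
  exact ⟨hu, by linear_combination hz⟩

private lemma key2 (a b c : ℂ)
    (hu : b * (starRingEnd ℂ) b = c * (starRingEnd ℂ) c)
    (hz : a * (starRingEnd ℂ) c = (starRingEnd ℂ) a * b) :
    ∃ lam : ℂ, (starRingEnd ℂ) a = lam * a ∧ (starRingEnd ℂ) c = lam * b ∧
      (starRingEnd ℂ) b = lam * c := by
  set K := starRingEnd ℂ
  by_cases ha : a = 0
  · by_cases hb : b = 0
    · have hc : c = 0 := by
        have : c * K c = 0 := by rw [← hu, hb]; ring
        rcases mul_eq_zero.mp this with h | h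
        · exact h
        · simpa using congrArg (starRingEnd ℂ) h
      exact ⟨0, by simp [ha, hb, hc]⟩
    · refine ⟨K c / b, by simp [ha], by field_simp, ?_⟩
      field_simp
      linear_combination hu
  · refine ⟨K a / a, by field_simp, ?_, ?_⟩
    · field_simp
      linear_combination hz
    · field_simp
      have := congrArg (starRingEnd ℂ) hz
      simp only [K, _root_.map_mul, Complex.conj_conj] at this
      linear_combination -this

/-- `SU(2)` admits no left-invariant Levi-flat CR structure: there is no one-dimensional
complex Lie subalgebra `h` of `su(2) ⊗ ℂ` (the traceless `2×2` complex matrices, with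
conjugation `M ↦ −Mᴴ` relative to the real form `su(2)`) such that `h ∩ h̄ = 0` and
`h + h̄` is closed under the bracket. -/
theorem stmt8 :
    ¬ ∃ h : Submodule ℂ (Matrix (Fin 2) (Fin 2) ℂ),
      (∀ M ∈ h, Matrix.trace M = 0) ∧
      Module.finrank ℂ h = 1 ∧
      (∀ A ∈ h, ∀ B ∈ h, ⁅A, B⁆ ∈ h) ∧
      (∀ M, M ∈ h → -Mᴴ ∈ h → M = 0) ∧
      (∀ A B C D : Matrix (Fin 2) (Fin 2) ℂ, A ∈ h → B ∈ h → C ∈ h → D ∈ h →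
        ∃ E ∈ h, ∃ F ∈ h, ⁅A + -Bᴴ, C + -Dᴴ⁆ = E + -Fᴴ) := by
  rintro ⟨h, htr, hrk, _hbr, hcr, hlf⟩
  obtain ⟨v, hv0, hvspan⟩ := finrank_eq_one_iff'.mp hrk
  set Z : Matrix (Fin 2) (Fin 2) ℂ := (v : Matrix (Fin 2) (Fin 2) ℂ) with hZdef
  have hZmem : Z ∈ h := v.2
  have hZne : Z ≠ 0 := fun hzz => hv0 (Subtype.ext hzz)
  have htrZ : Z 1 1 = -Z 0 0 := by
    have := htr Z hZmem
    rw [Matrix.trace_fin_two] at this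
    linear_combination this
  obtain ⟨E, hE, F, hF, hEq⟩ := hlf Z 0 0 Z hZmem h.zero_mem h.zero_mem hZmem
  obtain ⟨e, he⟩ := hvspan ⟨E, hE⟩
  obtain ⟨f, hf⟩ := hvspan ⟨F, hF⟩
  have heE : E = e • Z := by
    have := congrArg (Subtype.val) he
    exact this.symm
  have hfF : F = f • Z := by
    have := congrArg (Subtype.val) hf
    exact this.symm
  rw [heE, hfF] at hEq
  simp only [conjTranspose_zero, neg_zero, add_zero, zero_add, Ring.lie_def] at hEq
  set K := starRingEnd ℂ
  set a := Z 0 0; set b := Z 0 1; set c := Z 1 0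
  have h00 := congrFun (congrFun hEq 0) 0
  have h01 := congrFun (congrFun hEq 0) 1
  have h10 := congrFun (congrFun hEq 1) 0
  simp only [Matrix.sub_apply, Matrix.add_apply, Matrix.mul_apply, Fin.sum_univ_two,
    Matrix.neg_apply, Matrix.conjTranspose_apply, Matrix.smul_apply, smul_eq_mul,
    htrZ, RCLike.star_def, map_neg, _root_.map_mul] at h00 h01 h10
  have E1 : c * K c - b * K b = e * a - (K f) * K a := by
    linear_combination h00
  have E2 : 2 * (K a * b - a * K c) = e * b - (K f) * K c := by
    linear_combination h01
  have E3 : 2 * (a * K b - K a * c) = e * c - (K f) * K b := by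
    linear_combination h10
  obtain ⟨hu, hz⟩ := key1 a b c e (K f) E1 E2 E3
  obtain ⟨lam, hl1, hl2, hl3⟩ := key2 a b c hu hz
  have hherm : -Zᴴ = (-lam) • Z := by
    refine Matrix.ext ?_
    simp only [Fin.forall_fin_two, Matrix.neg_apply, Matrix.conjTranspose_apply,
      Matrix.smul_apply, smul_eq_mul, htrZ, RCLike.star_def, map_neg]
    refine ⟨⟨?_, ?_⟩, ?_, ?_⟩
    · linear_combination -hl1
    · linear_combination -hl2
    · linear_combination -hl3
    · linear_combination hl1
  have hmem : -Zᴴ ∈ h := by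
    rw [hherm]
    exact h.smul_mem _ hZmem
  exact hZne (hcr Z hZmem hmem)
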